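/- Let c ≥ 0 and define the Kalman gain with measurement noise R = c·δ² by K_R(δ) = Q(δ)·H₁ᵀ·(H₁·Q(δ)·H₁ᵀ + c·δ²)⁻¹ ∈ ℝ². Then there exists C > 0, depending only on θ, η and c, such that for all 0 < δ ≤ 1: |K_R(δ)₀ − δ/2| ≤ C·δ² and |K_R(δ)₁ − 1| ≤ C·δ. -/

import Mathlib

open Matrix MeasureTheory Real

noncomputable section

/-- Drift matrix `F = [[0, 1], [0, −θ]]` of the integrated Ornstein–Uhlenbeck prior. -/
def Fmat (θ : ℝ) : Matrix (Fin 2) (Fin 2) ℝ := !![0, 1; 0, -θ]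

/-- Diffusion column vector `L = (0, η)ᵀ`. -/
def Lmat (η : ℝ) : Matrix (Fin 2) (Fin 1) ℝ := !![0; η]

/-- Noise covariance `Q(δ) = ∫₀^δ exp(sF)·L·Lᵀ·exp(sFᵀ) ds` (entrywise Bochner integral). -/
def Qmat (θ η δ : ℝ) : Matrix (Fin 2) (Fin 2) ℝ :=
  Matrix.of fun i j => ∫ s in (0:ℝ)..δ,
    (NormedSpace.exp (s • Fmat θ) * (Lmat η * (Lmat η)ᵀ) *
      NormedSpace.exp (s • (Fmat θ)ᵀ)) i j


/-- Observation row vector `H₁ = (0, 1)`. -/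
def H1row : Matrix (Fin 1) (Fin 2) ℝ := !![0, 1]

/-- Kalman gain `K_R(δ) = Q(δ)·H₁ᵀ·(H₁·Q(δ)·H₁ᵀ + c·δ²)⁻¹` with measurement noise `R = c·δ²`. -/
def KgainR (θ η c δ : ℝ) : Matrix (Fin 2) (Fin 1) ℝ :=
  Qmat θ η δ * H1rowᵀ * (H1row * Qmat θ η δ * H1rowᵀ + (c * δ ^ 2) • (1 : Matrix (Fin 1) (Fin 1) ℝ))⁻¹

/-! ### Auxiliary machinery -/

/-- The function `g(s) = ∫₀ˢ e^{-θu} du` in closed form. -/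
def gfun (θ s : ℝ) : ℝ := if θ = 0 then s else (1 - Real.exp (-(θ * s))) / θ

lemma summable_aux (a : ℝ) : Summable (fun n : ℕ => a ^ n / (Nat.factorial (n+1))) := by
  apply Summable.of_norm_bounded (g := fun n : ℕ => |a| ^ n / (Nat.factorial n))
    (Real.summable_pow_div_factorial |a|)
  intro n
  rw [Real.norm_eq_abs, abs_div, abs_pow,
    abs_of_nonneg (by positivity : (0:ℝ) ≤ ((Nat.factorial (n+1)) : ℝ))]
  apply div_le_div_of_nonneg_left ?_ (by positivity) ?_
  · positivity
  · exact_mod_cast Nat.factorial_le (Nat.le_succ n)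

lemma tsum_aux (a : ℝ) :
    a * (∑' n : ℕ, a ^ n / (Nat.factorial (n+1))) = Real.exp a - 1 := by
  have h1 : Real.exp a = ∑' n : ℕ, a ^ n / (Nat.factorial n) := by
    rw [Real.exp_eq_exp_ℝ, NormedSpace.exp_eq_tsum_div]
  have h2 : Summable (fun n : ℕ => a ^ n / (Nat.factorial n)) :=
    Real.summable_pow_div_factorial a
  rw [h1, Summable.tsum_eq_zero_add h2]
  rw [← tsum_mul_left]
  simp only [pow_zero, Nat.factorial_zero, Nat.cast_one, div_one]
  rw [add_sub_cancel_left]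
  congr 1
  ext n
  rw [pow_succ]
  ring

lemma tsum_aux0 : (∑' n : ℕ, (0:ℝ) ^ n / (Nat.factorial (n+1))) = 1 := by
  rw [tsum_eq_single 0 (fun n hn => by simp [zero_pow hn])]
  simp

lemma exp_of_sq {M : Matrix (Fin 2) (Fin 2) ℝ} {a : ℝ} (h : M * M = a • M) :
    NormedSpace.exp M = 1 + (∑' n : ℕ, a ^ n / (Nat.factorial (n+1))) • M := by
  letI : SeminormedRing (Matrix (Fin 2) (Fin 2) ℝ) := Matrix.linftyOpSemiNormedRing
  letI : NormedRing (Matrix (Fin 2) (Fin 2) ℝ) := Matrix.linftyOpNormedRing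
  letI : NormedAlgebra ℝ (Matrix (Fin 2) (Fin 2) ℝ) := Matrix.linftyOpNormedAlgebra
  have hpow : ∀ n : ℕ, M ^ (n + 1) = a ^ n • M := by
    intro n
    induction n with
    | zero => simp
    | succ n ih =>
      rw [pow_succ, ih, smul_mul_assoc, h, smul_smul, pow_succ]
  rw [NormedSpace.exp_eq_tsum ℝ]
  show (∑' n : ℕ, ((Nat.factorial n : ℝ))⁻¹ • M ^ n) = _
  erw [Summable.tsum_eq_zero_add (NormedSpace.expSeries_summable' (𝕂 := ℝ) M)]
  congr 1
  · simp
  · have : ∀ n : ℕ, ((Nat.factorial (n+1) : ℝ))⁻¹ • M ^ (n + 1)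
        = (a ^ n / (Nat.factorial (n+1))) • M := by
      intro n
      rw [hpow, smul_smul, div_eq_inv_mul]
    simp only [this]
    rw [Summable.tsum_smul_const (summable_aux a)]

lemma exp_sF (θ s : ℝ) :
    NormedSpace.exp (s • Fmat θ) = !![1, gfun θ s; 0, Real.exp (-(θ * s))] := by
  have h : (s • Fmat θ) * (s • Fmat θ) = (-(θ * s)) • (s • Fmat θ) := by
    ext i j
    fin_cases i <;> fin_cases j <;>
      simp [Fmat, Matrix.mul_apply, Fin.sum_univ_two]
    all_goals try ring
    all_goals exact Or.inl trivial
  rw [exp_of_sq h]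
  rcases eq_or_ne (θ * s) 0 with h0 | h0
  · rw [show -(θ * s) = (0:ℝ) by rw [h0, neg_zero], tsum_aux0]
    rcases mul_eq_zero.mp h0 with hθ | hs
    · subst hθ
      ext i j
      fin_cases i <;> fin_cases j <;> simp [Fmat, gfun]
    · subst hs
      ext i j
      fin_cases i <;> fin_cases j <;> simp [Fmat, gfun] <;> split_ifs <;> simp_all
  · have hθ : θ ≠ 0 := fun h' => h0 (by simp [h'])
    have hs : s ≠ 0 := fun h' => h0 (by simp [h'])
    have hT : (∑' n : ℕ, (-(θ * s)) ^ n / (Nat.factorial (n+1)))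
        = (Real.exp (-(θ * s)) - 1) / (-(θ * s)) := by
      rw [eq_div_iff (neg_ne_zero.mpr h0)]
      have := tsum_aux (-(θ * s))
      linarith [this]
    rw [hT]
    ext i j
    fin_cases i <;> fin_cases j <;> simp [Fmat, gfun, hθ] <;> field_simp <;> ring

lemma integrand_eq (θ η s : ℝ) :
    (NormedSpace.exp (s • Fmat θ) * (Lmat η * (Lmat η)ᵀ) *
      NormedSpace.exp (s • (Fmat θ)ᵀ)) =
    !![η^2 * (gfun θ s)^2, η^2 * (gfun θ s * Real.exp (-(θ * s)));
       η^2 * (gfun θ s * Real.exp (-(θ * s))), η^2 * (Real.exp (-(θ * s)))^2] := by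
  have h2 : s • (Fmat θ)ᵀ = (s • Fmat θ)ᵀ := (Matrix.transpose_smul s (Fmat θ)).symm
  have hL : Lmat η * (Lmat η)ᵀ = !![0, 0; 0, η^2] := by
    ext i j
    fin_cases i <;> fin_cases j <;>
      simp [Lmat, Matrix.mul_apply, Fin.sum_univ_one, Matrix.transpose_apply,
        Matrix.vecHead, Matrix.vecTail] <;> ring
  have hT : (!![1, gfun θ s; 0, Real.exp (-(θ * s))])ᵀ
      = !![1, 0; gfun θ s, Real.exp (-(θ * s))] := by
    ext i j; fin_cases i <;> fin_cases j <;> rfl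
  rw [h2, Matrix.exp_transpose, exp_sF, hL, hT, Matrix.mul_fin_two, Matrix.mul_fin_two]
  ext i j
  fin_cases i <;> fin_cases j <;> simp <;> ring

lemma Q01_eq (θ η δ : ℝ) :
    Qmat θ η δ 0 1 = ∫ s in (0:ℝ)..δ, η^2 * (gfun θ s * Real.exp (-(θ * s))) := by
  unfold Qmat
  simp only [Matrix.of_apply, integrand_eq]
  norm_num

lemma Q11_eq (θ η δ : ℝ) :
    Qmat θ η δ 1 1 = ∫ s in (0:ℝ)..δ, η^2 * (Real.exp (-(θ * s)))^2 := by
  unfold Qmat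
  simp only [Matrix.of_apply, integrand_eq]
  norm_num

lemma inv_fin_one (A : Matrix (Fin 1) (Fin 1) ℝ) : A⁻¹ = !![(A 0 0)⁻¹] := by
  rw [Matrix.inv_def, Matrix.adjugate_fin_one, Matrix.det_fin_one]
  ext i j
  fin_cases i <;> fin_cases j <;> simp

lemma K_entry (θ η c δ : ℝ) (i : Fin 2) :
    KgainR θ η c δ i 0 = Qmat θ η δ i 1 / (Qmat θ η δ 1 1 + c * δ ^ 2) := by
  unfold KgainR
  have hS : H1row * Qmat θ η δ * H1rowᵀ + (c * δ ^ 2) • (1 : Matrix (Fin 1) (Fin 1) ℝ)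
      = !![Qmat θ η δ 1 1 + c * δ ^ 2] := by
    ext i' j'
    fin_cases i' <;> fin_cases j' <;>
      simp [H1row, Matrix.mul_apply, Fin.sum_univ_two, Fin.sum_univ_one,
        Matrix.transpose_apply, Matrix.vecMul, dotProduct,
        Matrix.vecHead, Matrix.vecTail]
  rw [hS, inv_fin_one]
  simp [H1row, Matrix.mul_apply, Fin.sum_univ_two, Fin.sum_univ_one, div_eq_mul_inv,
    Matrix.transpose_apply, Matrix.vecMul, dotProduct,
    Matrix.vecHead, Matrix.vecTail]

lemma gfun_cont (θ : ℝ) : Continuous (gfun θ) := by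
  unfold gfun
  split_ifs with h
  · exact continuous_id
  · exact ((continuous_const.sub (Real.continuous_exp.comp (by continuity))).div_const θ)

lemma f_bounds (θ s : ℝ) (hθ : 0 ≤ θ) (hs : 0 ≤ s) :
    1 - θ * s ≤ Real.exp (-(θ * s)) ∧ Real.exp (-(θ * s)) ≤ 1 ∧
    Real.exp (-(θ * s)) ≤ 1 - θ * s + (θ * s)^2 := by
  have h1 := Real.add_one_le_exp (-(θ * s))
  have h2 := Real.add_one_le_exp (θ * s)
  have h3 : Real.exp (-(θ * s)) * Real.exp (θ * s) = 1 := by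
    rw [← Real.exp_add]; simp
  have h4 := Real.exp_pos (-(θ * s))
  refine ⟨by linarith, Real.exp_le_one_iff.mpr (by nlinarith), ?_⟩
  nlinarith [mul_nonneg hθ hs, sq_nonneg (θ * s), mul_nonneg (mul_nonneg hθ hs) (mul_nonneg hθ hs)]

lemma gfun_bounds (θ s : ℝ) (hθ : 0 ≤ θ) (hs : 0 ≤ s) :
    s - θ * s^2 ≤ gfun θ s ∧ gfun θ s ≤ s ∧ 0 ≤ gfun θ s := by
  obtain ⟨hf1, hf2, hf3⟩ := f_bounds θ s hθ hs
  unfold gfun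
  split_ifs with h
  · subst h; norm_num [hs]
  · have hθ' : 0 < θ := lt_of_le_of_ne hθ (Ne.symm h)
    refine ⟨?_, ?_, ?_⟩
    · rw [le_div_iff₀ hθ']; nlinarith
    · rw [div_le_iff₀ hθ']; nlinarith
    · exact div_nonneg (by linarith) hθ

lemma pointwise_bound (θ δ s : ℝ) (hθ : 0 ≤ θ) (hs0 : 0 ≤ s) (hsδ : s ≤ δ) :
    |gfun θ s * Real.exp (-(θ * s)) - δ / 2 * (Real.exp (-(θ * s)))^2 - (s - δ / 2)|
      ≤ 3 * θ * δ^2 := by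
  obtain ⟨hf1, hf2, _⟩ := f_bounds θ s hθ hs0
  obtain ⟨hg1, hg2, hg3⟩ := gfun_bounds θ s hθ hs0
  set g := gfun θ s
  set f := Real.exp (-(θ * s))
  have hf0 : 0 < f := Real.exp_pos _
  have hδ0 : 0 ≤ δ := le_trans hs0 hsδ
  have hff : 1 - 2*(θ*s) ≤ f^2 := by
    have hq : f^2 = Real.exp (-(θ*s) + -(θ*s)) := by rw [Real.exp_add]; ring
    rw [hq]; linarith [Real.add_one_le_exp (-(θ*s) + -(θ*s))]
  have hf2' : f^2 ≤ 1 := by nlinarith [mul_le_mul hf2 hf2 (le_of_lt hf0) zero_le_one]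
  have hs2 : s^2 ≤ δ^2 := by nlinarith
  have h1 : 0 ≤ δ / 2 * (1 - f^2) := mul_nonneg (by linarith) (by linarith)
  have h2 : δ / 2 * (1 - f^2) ≤ θ * δ^2 := by
    have a1 : δ / 2 * (1 - f^2) ≤ δ / 2 * (2*(θ*s)) :=
      mul_le_mul_of_nonneg_left (by linarith) (by linarith)
    nlinarith [mul_nonneg (mul_nonneg hθ (sub_nonneg.mpr hsδ)) hδ0]
  have h3 : g * f - s ≤ 0 := by
    nlinarith [mul_le_mul hg2 hf2 (le_of_lt hf0) hs0]
  have h4 : -(2 * θ * δ^2) ≤ g * f - s := by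
    have hθδ : θ * s^2 ≤ θ * δ^2 := mul_le_mul_of_nonneg_left hs2 hθ
    rcases le_or_gt (θ * s) 1 with hc | hc
    · have hmul : (s - θ*s^2) * (1 - θ*s) ≤ g * f :=
        mul_le_mul hg1 hf1 (by linarith) hg3
      nlinarith [mul_nonneg (mul_nonneg (mul_nonneg hθ hθ) hs0) (mul_nonneg hs0 hs0)]
    · have hgf0 : 0 ≤ g * f := mul_nonneg hg3 (le_of_lt hf0)
      have : 1 * s ≤ (θ*s) * s := mul_le_mul_of_nonneg_right (le_of_lt hc) hs0
      nlinarith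
  rw [abs_le]
  constructor <;> nlinarith [mul_nonneg hθ (sq_nonneg δ)]

set_option maxHeartbeats 1000000 in
/-- With measurement noise `R = c·δ²`, the Kalman gain of the one-step EKF0 with IOUP prior
satisfies `K₀ = δ/2 + O(δ²)` and `K₁ = 1 + O(δ)`, with a constant depending only on
`θ`, `η` and `c`. -/
theorem ekf0_kalman_gain_noisy (θ η c : ℝ) (hθ : 0 ≤ θ) (hη : 0 < η) (hc : 0 ≤ c) :
    ∃ C : ℝ, 0 < C ∧ ∀ δ : ℝ, 0 < δ → δ ≤ 1 →
      |KgainR θ η c δ 0 0 - δ / 2| ≤ C * δ ^ 2 ∧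
      |KgainR θ η c δ 1 0 - 1| ≤ C * δ := by
  set m : ℝ := η^2 * Real.exp (-(2*θ)) with hm_def
  have hm : 0 < m := by positivity
  set B : ℝ := 3 * θ * η^2 + c / 2 with hB_def
  have hB : 0 ≤ B := by positivity
  refine ⟨(B + c) / m + 1, by positivity, ?_⟩
  intro δ hδ hδ1
  set Q01 : ℝ := Qmat θ η δ 0 1 with hQ01_def
  set Q11 : ℝ := Qmat θ η δ 1 1 with hQ11_def
  -- continuity and integrability
  have cf : Continuous fun s : ℝ => Real.exp (-(θ * s)) :=
    Real.continuous_exp.comp (by continuity)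
  have int1 : IntervalIntegrable (fun s : ℝ => η^2 * (Real.exp (-(θ * s)))^2)
      volume 0 δ := (Continuous.mul continuous_const (cf.pow 2)).intervalIntegrable 0 δ
  have int2 : IntervalIntegrable (fun s : ℝ => η^2 * (gfun θ s * Real.exp (-(θ * s))))
      volume 0 δ :=
    (Continuous.mul continuous_const ((gfun_cont θ).mul cf)).intervalIntegrable 0 δ
  have int3 : IntervalIntegrable (fun s : ℝ => η^2 * (s - δ/2)) volume 0 δ :=
    (Continuous.mul continuous_const (by continuity)).intervalIntegrable 0 δ
  -- Step A : lower bound on Q11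
  have hA : m * δ ≤ Q11 := by
    rw [hQ11_def, Q11_eq]
    have hmono : ∫ s in (0:ℝ)..δ, m ≤ ∫ s in (0:ℝ)..δ, η^2 * (Real.exp (-(θ * s)))^2 := by
      apply intervalIntegral.integral_mono_on (le_of_lt hδ)
        (intervalIntegrable_const) int1
      intro s hs
      have hs0 : 0 ≤ s := hs.1
      have hs1 : s ≤ 1 := le_trans hs.2 hδ1
      have hfsq : (Real.exp (-(θ * s)))^2 = Real.exp (-(θ*s) + -(θ*s)) := by
        rw [Real.exp_add]; ring
      have : Real.exp (-(2*θ)) ≤ (Real.exp (-(θ * s)))^2 := by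
        rw [hfsq]
        apply Real.exp_le_exp.mpr
        nlinarith [mul_nonneg hθ (sub_nonneg.mpr hs1)]
      rw [hm_def]
      nlinarith [sq_nonneg η]
    rw [intervalIntegral.integral_const, smul_eq_mul] at hmono
    nlinarith [hmono]
  have hQ11pos : 0 < Q11 := lt_of_lt_of_le (by positivity) hA
  -- Step B : |Q01 - (δ/2) Q11| ≤ 3θη²δ³
  have hBbd : |Q01 - δ/2 * Q11| ≤ 3 * θ * η^2 * δ^3 := by
    have e2 : δ/2 * Q11 = ∫ s in (0:ℝ)..δ, δ/2 * (η^2 * (Real.exp (-(θ * s)))^2) := by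
      simp only [hQ11_def, Q11_eq, intervalIntegral.integral_const_mul]
      try ring
    have e3 : (∫ s in (0:ℝ)..δ, η^2 * (s - δ/2)) = 0 := by
      have : (∫ s in (0:ℝ)..δ, η^2 * (s - δ/2))
          = η^2 * ∫ s in (0:ℝ)..δ, (s - δ/2) := by
        rw [intervalIntegral.integral_const_mul]
      rw [this]
      have : (∫ s in (0:ℝ)..δ, (s - δ/2))
          = (∫ s in (0:ℝ)..δ, s) - ∫ s in (0:ℝ)..δ, (δ/2 : ℝ) := by
        apply intervalIntegral.integral_sub
        · exact (continuous_id).intervalIntegrable 0 δ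
        · exact intervalIntegrable_const
      rw [this, integral_id, intervalIntegral.integral_const, smul_eq_mul]
      ring
    have int4 : IntervalIntegrable
        (fun s : ℝ => δ/2 * (η^2 * (Real.exp (-(θ * s)))^2)) volume 0 δ :=
      (Continuous.mul continuous_const (Continuous.mul continuous_const (cf.pow 2))).intervalIntegrable 0 δ
    have key : Q01 - δ/2 * Q11
        = ∫ s in (0:ℝ)..δ,
            (η^2 * (gfun θ s * Real.exp (-(θ * s)))
              - δ/2 * (η^2 * (Real.exp (-(θ * s)))^2) - η^2 * (s - δ/2)) := by
      rw [intervalIntegral.integral_sub (int2.sub int4) int3,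
        intervalIntegral.integral_sub int2 int4, e3, hQ01_def, Q01_eq, ← e2]
      ring
    rw [key]
    have hnorm : ∀ s ∈ Set.uIoc (0:ℝ) δ,
        ‖η^2 * (gfun θ s * Real.exp (-(θ * s)))
          - δ/2 * (η^2 * (Real.exp (-(θ * s)))^2) - η^2 * (s - δ/2)‖
          ≤ η^2 * (3 * θ * δ^2) := by
      intro s hs
      rw [Set.uIoc_of_le (le_of_lt hδ)] at hs
      have heq : η^2 * (gfun θ s * Real.exp (-(θ * s)))
          - δ/2 * (η^2 * (Real.exp (-(θ * s)))^2) - η^2 * (s - δ/2)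
          = η^2 * (gfun θ s * Real.exp (-(θ * s))
              - δ/2 * (Real.exp (-(θ * s)))^2 - (s - δ/2)) := by ring
      rw [heq, Real.norm_eq_abs, abs_mul, abs_of_nonneg (sq_nonneg η)]
      exact mul_le_mul_of_nonneg_left
        (pointwise_bound θ δ s hθ (le_of_lt hs.1) hs.2) (sq_nonneg η)
    have := intervalIntegral.norm_integral_le_of_norm_le_const hnorm
    rw [Real.norm_eq_abs] at this
    calc |∫ s in (0:ℝ)..δ, _| ≤ η^2 * (3 * θ * δ^2) * |δ - 0| := this
      _ = 3 * θ * η^2 * δ^3 := by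
          rw [abs_of_pos (by linarith : (0:ℝ) < δ - 0)]; ring
  -- assembly
  set D : ℝ := Q11 + c * δ^2 with hD_def
  have hD : 0 < D := by nlinarith [hA, mul_nonneg hc (sq_nonneg δ)]
  have hDm : m * δ ≤ D := by nlinarith [mul_nonneg hc (sq_nonneg δ)]
  have hK0 : KgainR θ η c δ 0 0 = Q01 / D := K_entry θ η c δ 0
  have hK1 : KgainR θ η c δ 1 0 = Q11 / D := K_entry θ η c δ 1
  constructor
  · rw [hK0]
    have hnum : Q01 - δ/2 * D = Q01 - δ/2 * Q11 - c/2 * δ^3 := by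
      rw [hD_def]; ring
    have habs : |Q01 - δ/2 * D| ≤ B * δ^3 := by
      rw [hnum, hB_def]
      calc |Q01 - δ/2 * Q11 - c/2 * δ^3|
          ≤ |Q01 - δ/2 * Q11| + |c/2 * δ^3| := abs_sub _ _
        _ ≤ 3 * θ * η^2 * δ^3 + c/2 * δ^3 := by
            apply add_le_add hBbd
            rw [abs_of_nonneg (by positivity)]
        _ = (3 * θ * η^2 + c / 2) * δ^3 := by ring
    have heq : Q01 / D - δ / 2 = (Q01 - δ/2 * D) / D := by
      field_simp
    rw [heq, abs_div, abs_of_pos hD, div_le_iff₀ hD]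
    have hCm : ((B + c) / m + 1) * m ≥ B + m := by
      rw [add_mul, div_mul_cancel₀ _ (ne_of_gt hm)]
      nlinarith
    nlinarith [mul_le_mul_of_nonneg_left hDm
        (by positivity : (0:ℝ) ≤ ((B + c) / m + 1) * δ^2), sq_nonneg δ,
      mul_pos hδ (mul_pos hδ hδ)]
  · rw [hK1]
    have heq : Q11 / D - 1 = -(c * δ^2) / D := by
      rw [div_sub_one (ne_of_gt hD), hD_def]
      ring_nf
    rw [heq, abs_div, abs_of_pos hD, div_le_iff₀ hD, abs_neg,
      abs_of_nonneg (by positivity : (0:ℝ) ≤ c * δ^2)]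
    have hCm : ((B + c) / m + 1) * m ≥ c + m := by
      rw [add_mul, div_mul_cancel₀ _ (ne_of_gt hm)]
      nlinarith
    nlinarith [mul_le_mul_of_nonneg_left hDm
        (by positivity : (0:ℝ) ≤ ((B + c) / m + 1) * δ), sq_nonneg δ]
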